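/- For 𝕜-modules V and W and a natural number q, there is a natural isomorphism (V ⊕ W)^{⊗q} ≅ ⨁_{J ⊆ {1,…,q}} V^{⊗|J|} ⊗ W^{⊗(q−|J|)}, where the sum runs over all subsets J of {1,…,q}. -/

import Mathlib

open scoped TensorProduct DirectSum

namespace Stmt5Aux

open PiTensorProduct

variable {q : ℕ}

/-- The index equivalence associated to a subset `J` of `Fin q`. -/
noncomputable def σ (J : Finset (Fin q)) : Fin J.card ⊕ Fin (q - J.card) ≃ Fin q :=
  (Equiv.sumCongr (J.orderIsoOfFin rfl).toEquiv
      (((Jᶜ).orderIsoOfFin (by simp [Finset.card_compl])).toEquiv.trans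
        (Equiv.subtypeEquivRight (fun x => Finset.mem_compl)))).trans
    (Equiv.sumCompl (· ∈ J))

lemma σ_inl_mem (J : Finset (Fin q)) (k : Fin J.card) : σ J (Sum.inl k) ∈ J := by
  simp only [σ, Equiv.trans_apply, Equiv.sumCongr_apply, Sum.map_inl,
    Equiv.sumCompl_apply_inl]
  exact (J.orderIsoOfFin rfl k).2

lemma σ_inr_not_mem (J : Finset (Fin q)) (k : Fin (q - J.card)) : σ J (Sum.inr k) ∉ J := by
  simp only [σ, Equiv.trans_apply, Equiv.sumCongr_apply, Sum.map_inr,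
    Equiv.sumCompl_apply_inr]
  exact (Equiv.subtypeEquivRight (q := (¬ · ∈ J)) (fun x => Finset.mem_compl)
    (((Jᶜ).orderIsoOfFin (by simp [Finset.card_compl])).toEquiv k)).2

lemma exists_inl (J : Finset (Fin q)) {i : Fin q} (h : i ∈ J) :
    ∃ k, σ J (Sum.inl k) = i := by
  rcases hk : (σ J).symm i with k | k
  · exact ⟨k, by rw [← hk, Equiv.apply_symm_apply]⟩
  · exact absurd (((σ J).symm_apply_eq.mp hk) ▸ h) (σ_inr_not_mem J k)

lemma exists_inr (J : Finset (Fin q)) {i : Fin q} (h : i ∉ J) :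
    ∃ k, σ J (Sum.inr k) = i := by
  rcases hk : (σ J).symm i with k | k
  · exact absurd (((σ J).symm_apply_eq.mp hk).symm ▸ σ_inl_mem J k) h
  · exact ⟨k, by rw [← hk, Equiv.apply_symm_apply]⟩

variable (𝕜 : Type) [CommRing 𝕜]
variable (V W : Type) [AddCommGroup V] [Module 𝕜 V] [AddCommGroup W] [Module 𝕜 W]

/-- The `J`-component of the forward map. -/
noncomputable def φJ (J : Finset (Fin q)) :
    (⨂[𝕜] (_ : Fin q), (V × W)) →ₗ[𝕜]
      ((⨂[𝕜] (_ : Fin (J.card)), V) ⊗[𝕜] (⨂[𝕜] (_ : Fin (q - J.card)), W)) :=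
  TensorProduct.map (PiTensorProduct.map fun _ => LinearMap.fst 𝕜 V W)
      (PiTensorProduct.map fun _ => LinearMap.snd 𝕜 V W)
    ∘ₗ (tmulEquiv 𝕜 (V × W)).symm.toLinearMap
    ∘ₗ (reindex 𝕜 (fun _ : Fin q => (V × W)) (σ J).symm).toLinearMap

lemma φJ_tprod (J : Finset (Fin q)) (v : Fin q → V × W) :
    φJ 𝕜 V W J (tprod 𝕜 v) =
      (tprod 𝕜 fun k => (v (σ J (Sum.inl k))).1) ⊗ₜ[𝕜]
        (tprod 𝕜 fun k => (v (σ J (Sum.inr k))).2) := by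
  simp [φJ]

/-- The `J`-component of the backward map. -/
noncomputable def ψJ (J : Finset (Fin q)) :
    ((⨂[𝕜] (_ : Fin (J.card)), V) ⊗[𝕜] (⨂[𝕜] (_ : Fin (q - J.card)), W)) →ₗ[𝕜]
      (⨂[𝕜] (_ : Fin q), (V × W)) :=
  (reindex 𝕜 (fun _ : Fin J.card ⊕ Fin (q - J.card) => (V × W)) (σ J)).toLinearMap
    ∘ₗ (tmulEquiv 𝕜 (V × W)).toLinearMap
    ∘ₗ TensorProduct.map (PiTensorProduct.map fun _ => LinearMap.inl 𝕜 V W)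
        (PiTensorProduct.map fun _ => LinearMap.inr 𝕜 V W)

lemma ψJ_tmul (J : Finset (Fin q)) (a : Fin J.card → V) (b : Fin (q - J.card) → W) :
    ψJ 𝕜 V W J ((tprod 𝕜 a) ⊗ₜ[𝕜] (tprod 𝕜 b)) =
      tprod 𝕜 fun i =>
        Sum.elim (fun k => ((a k, 0) : V × W)) (fun k => ((0, b k) : V × W))
          ((σ J).symm i) := by
  simp [ψJ]

/-- The forward map. -/
noncomputable def φ :
    (⨂[𝕜] (_ : Fin q), (V × W)) →ₗ[𝕜]
      (⨁ (J : Finset (Fin q)),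
        ((⨂[𝕜] (_ : Fin (J.card)), V) ⊗[𝕜] (⨂[𝕜] (_ : Fin (q - J.card)), W))) :=
  ∑ J : Finset (Fin q),
    (DirectSum.lof 𝕜 (Finset (Fin q))
        (fun J => ((⨂[𝕜] (_ : Fin (J.card)), V) ⊗[𝕜] (⨂[𝕜] (_ : Fin (q - J.card)), W))) J)
      ∘ₗ φJ 𝕜 V W J

/-- The backward map. -/
noncomputable def ψ :
    (⨁ (J : Finset (Fin q)),
        ((⨂[𝕜] (_ : Fin (J.card)), V) ⊗[𝕜] (⨂[𝕜] (_ : Fin (q - J.card)), W))) →ₗ[𝕜]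
      (⨂[𝕜] (_ : Fin q), (V × W)) :=
  DirectSum.toModule 𝕜 _ _ (fun J => ψJ 𝕜 V W J)

lemma φ_apply_component (x : ⨂[𝕜] (_ : Fin q), (V × W)) (J : Finset (Fin q)) :
    (φ 𝕜 V W (q := q) x) J = φJ 𝕜 V W J x := by
  rw [φ, LinearMap.sum_apply]
  rw [DFinsupp.finset_sum_apply]
  rw [Finset.sum_eq_single J]
  · simp [DirectSum.lof_apply]
  · intro J' _ hne
    exact DirectSum.of_eq_of_ne _ _ _ hne.symm
  · simp

lemma ψφ (v : Fin q → V × W) : ψ 𝕜 V W (φ 𝕜 V W (tprod 𝕜 v)) = tprod 𝕜 v := by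
  rw [φ, LinearMap.sum_apply, map_sum]
  have key : ∀ J : Finset (Fin q),
      ψ 𝕜 V W (((DirectSum.lof 𝕜 (Finset (Fin q)) _ J) ∘ₗ φJ 𝕜 V W J) (tprod 𝕜 v)) =
        tprod 𝕜 (J.piecewise (fun i => (((v i).1, 0) : V × W))
          (fun i => ((0, (v i).2) : V × W))) := by
    intro J
    rw [LinearMap.comp_apply, ψ, DirectSum.toModule_lof, φJ_tprod, ψJ_tmul]
    congr 1
    funext i
    rcases hk : (σ J).symm i with k | k
    · have hi : σ J (Sum.inl k) = i := by rw [← hk, Equiv.apply_symm_apply]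
      have hm : i ∈ J := hi ▸ σ_inl_mem J k
      simp [hk, hi, Finset.piecewise_eq_of_mem _ _ _ hm]
    · have hi : σ J (Sum.inr k) = i := by rw [← hk, Equiv.apply_symm_apply]
      have hm : i ∉ J := hi ▸ σ_inr_not_mem J k
      simp [hk, hi, Finset.piecewise_eq_of_notMem _ _ _ hm]
  simp only [key]
  have := (tprod 𝕜 (s := fun _ : Fin q => (V × W))).map_add_univ
    (fun i => (((v i).1, 0) : V × W)) (fun i => ((0, (v i).2) : V × W))
  have hv : (fun i => (((v i).1, 0) : V × W)) + (fun i => ((0, (v i).2) : V × W)) = v := by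
    funext i; simp [Prod.ext_iff]
  rw [hv] at this
  rw [this]

lemma φψ (J : Finset (Fin q)) (a : Fin J.card → V) (b : Fin (q - J.card) → W) :
    φ 𝕜 V W (ψJ 𝕜 V W J ((tprod 𝕜 a) ⊗ₜ[𝕜] (tprod 𝕜 b))) =
      DirectSum.lof 𝕜 (Finset (Fin q))
        (fun J => ((⨂[𝕜] (_ : Fin (J.card)), V) ⊗[𝕜] (⨂[𝕜] (_ : Fin (q - J.card)), W))) J
        ((tprod 𝕜 a) ⊗ₜ[𝕜] (tprod 𝕜 b)) := by
  rw [ψJ_tmul]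
  set x : Fin q → V × W := fun i =>
    Sum.elim (fun k => ((a k, 0) : V × W)) (fun k => ((0, b k) : V × W)) ((σ J).symm i)
    with hx
  have hx_mem : ∀ i ∈ J, (x i).2 = 0 := by
    intro i hi
    obtain ⟨k, hk⟩ := exists_inl J hi
    simp [hx, ← hk, Equiv.symm_apply_apply]
  have hx_not_mem : ∀ i ∉ J, (x i).1 = 0 := by
    intro i hi
    obtain ⟨k, hk⟩ := exists_inr J hi
    simp [hx, ← hk, Equiv.symm_apply_apply]
  rw [φ, LinearMap.sum_apply]
  rw [Finset.sum_eq_single J]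
  · rw [LinearMap.comp_apply, φJ_tprod]
    have h1 : (fun k => (x ((σ J) (Sum.inl k))).1) = a := by
      funext k; simp [hx, Equiv.symm_apply_apply]
    have h2 : (fun k => (x ((σ J) (Sum.inr k))).2) = b := by
      funext k; simp [hx, Equiv.symm_apply_apply]
    rw [h1, h2]
  · intro J' _ hne
    rw [LinearMap.comp_apply, φJ_tprod]
    by_cases hsub : J' ⊆ J
    · obtain ⟨i, hiJ, hiJ'⟩ := Finset.exists_of_ssubset (hsub.ssubset_of_ne hne)
      obtain ⟨k, hk⟩ := exists_inr J' hiJ'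
      have h0 : (x (σ J' (Sum.inr k))).2 = 0 := by rw [hk]; exact hx_mem i hiJ
      have hz : ((PiTensorProduct.tprod 𝕜) fun k => (x ((σ J') (Sum.inr k))).2) = 0 :=
        MultilinearMap.map_coord_zero _ k h0
      rw [hz, TensorProduct.tmul_zero, map_zero]
    · obtain ⟨i, hiJ', hiJ⟩ := Finset.not_subset.mp hsub
      obtain ⟨k, hk⟩ := exists_inl J' hiJ'
      have h0 : (x (σ J' (Sum.inl k))).1 = 0 := by rw [hk]; exact hx_not_mem i hiJ
      have hz : ((PiTensorProduct.tprod 𝕜) fun k => (x ((σ J') (Sum.inl k))).1) = 0 :=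
        MultilinearMap.map_coord_zero _ k h0
      rw [hz, TensorProduct.zero_tmul, map_zero]
  · simp

end Stmt5Aux

/-- For `𝕜`-modules `V` and `W` and `q ∈ ℕ`, there is a natural isomorphism
`(V ⊕ W)^{⊗q} ≅ ⨁_{J ⊆ {1,…,q}} V^{⊗|J|} ⊗ W^{⊗(q−|J|)}`, the sum running over all subsets
`J` of `{1,…,q}`.  Naturality means the family of isomorphisms commutes, componentwise, with
the maps induced by arbitrary pairs of linear maps `f : V → V'`, `g : W → W'`. -/
theorem stmt_5 (𝕜 : Type) [CommRing 𝕜] (q : ℕ) :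
    ∃ e : ∀ (V W : Type) [AddCommGroup V] [Module 𝕜 V] [AddCommGroup W] [Module 𝕜 W],
        (⨂[𝕜] (_ : Fin q), (V × W)) ≃ₗ[𝕜]
          (⨁ (J : Finset (Fin q)),
            ((⨂[𝕜] (_ : Fin (J.card)), V) ⊗[𝕜] (⨂[𝕜] (_ : Fin (q - J.card)), W))),
      ∀ (V W V' W' : Type) [AddCommGroup V] [Module 𝕜 V] [AddCommGroup W] [Module 𝕜 W]
        [AddCommGroup V'] [Module 𝕜 V'] [AddCommGroup W'] [Module 𝕜 W']
        (f : V →ₗ[𝕜] V') (g : W →ₗ[𝕜] W')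
        (x : ⨂[𝕜] (_ : Fin q), (V × W)) (J : Finset (Fin q)),
        (e V' W' ((PiTensorProduct.map fun _ => f.prodMap g) x)) J =
          (TensorProduct.map (PiTensorProduct.map fun _ => f)
            (PiTensorProduct.map fun _ => g)) ((e V W x) J) := by
  classical
  refine ⟨fun V W _ _ _ _ =>
    LinearEquiv.ofLinear (Stmt5Aux.φ 𝕜 V W) (Stmt5Aux.ψ 𝕜 V W) ?_ ?_, ?_⟩
  · -- φ ∘ ψ = id
    refine DirectSum.linearMap_ext _ fun J => ?_
    ext a b i
    have := Stmt5Aux.φψ 𝕜 V W J a b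
    simpa [Stmt5Aux.ψ, DirectSum.toModule_lof] using DFunLike.congr_fun this i
  · -- ψ ∘ φ = id
    ext v
    simpa using Stmt5Aux.ψφ 𝕜 V W v
  · intro V W V' W' _ _ _ _ _ _ _ _ f g x J
    induction x using PiTensorProduct.induction_on with
    | smul_tprod r v =>
      simp only [map_smul, LinearEquiv.ofLinear_apply, DFinsupp.smul_apply,
        PiTensorProduct.map_tprod]
      simp only [map_smul, LinearEquiv.ofLinear_apply, DirectSum.smul_apply,
        PiTensorProduct.map_tprod]
      rw [Stmt5Aux.φ_apply_component, Stmt5Aux.φ_apply_component,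
        Stmt5Aux.φJ_tprod, Stmt5Aux.φJ_tprod]
      simp
    | add x y hx hy =>
      simp only [map_add, LinearEquiv.ofLinear_apply, DirectSum.add_apply] at *
      rw [hx, hy]
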